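/- For every permutation π of {1,…,n}, the rectangular distance between the permuton ĥπ associated with π and the empirical measure μ_π = (1/n)·Σ_{i=1}^n δ_{(i/n, π(i)/n)} satisfies 1/n ≤ d_□(ĥπ, μ_π) ≤ 4/n. -/

import Mathlib

open MeasureTheory Set Filter Topology

/-- Rectangular distance between two measures on the plane: supremum over axis-aligned
rectangles `[a,b] × [c,d]` of the difference of their measures. -/
noncomputable def dRect (μ ν : Measure (ℝ × ℝ)) : ℝ :=
  ⨆ r : ℝ × ℝ × ℝ × ℝ,
    |(μ (Icc r.1 r.2.1 ×ˢ Icc r.2.2.1 r.2.2.2)).toReal -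
      (ν (Icc r.1 r.2.1 ×ˢ Icc r.2.2.1 r.2.2.2)).toReal|

/-- Star discrepancy: supremum over anchored rectangles `[0,x] × [0,y]`. -/
noncomputable def dStar (μ ν : Measure (ℝ × ℝ)) : ℝ :=
  ⨆ r : ℝ × ℝ,
    |(μ (Icc 0 r.1 ×ˢ Icc 0 r.2)).toReal - (ν (Icc 0 r.1 ×ˢ Icc 0 r.2)).toReal|

/-- A permuton: probability measure on the unit square with uniform marginals. -/
def IsPermuton (μ : Measure (ℝ × ℝ)) : Prop :=
  IsProbabilityMeasure μ ∧ μ.map Prod.fst = volume.restrict (Icc 0 1) ∧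
    μ.map Prod.snd = volume.restrict (Icc 0 1)

/-- The permuton associated with a permutation of `{1, …, n}` (0-indexed here):
density `n` on the union of the base squares. -/
noncomputable def hatPerm (n : ℕ) (π : Equiv.Perm (Fin n)) : Measure (ℝ × ℝ) :=
  (n : ENNReal) • volume.restrict (⋃ i : Fin n,
    Icc (((i : ℕ) : ℝ) / n) ((((i : ℕ) : ℝ) + 1) / n) ×ˢ
      Icc (((π i : ℕ) : ℝ) / n) ((((π i : ℕ) : ℝ) + 1) / n))

/-- Empirical (uniform) measure on a finite indexed point family. -/
noncomputable def empMeasure {n : ℕ} (P : Fin n → ℝ × ℝ) : Measure (ℝ × ℝ) :=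
  (n : ENNReal)⁻¹ • ∑ i, Measure.dirac (P i)

/-- The point set `{(i/n, π(i)/n) : i = 1, …, n}` associated with a permutation. -/
noncomputable def permPts (n : ℕ) (π : Equiv.Perm (Fin n)) : Fin n → ℝ × ℝ :=
  fun i => ((((i : ℕ) : ℝ) + 1) / n, (((π i : ℕ) : ℝ) + 1) / n)

/-- `D_n(μ)`: best rectangular-distance approximation of `μ` by an `n`-permutation. -/
noncomputable def Dn (n : ℕ) (μ : Measure (ℝ × ℝ)) : ℝ :=
  ⨅ π : Equiv.Perm (Fin n), dRect μ (hatPerm n π)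

namespace PermutonAux

lemma toReal_ofReal_max (z : ℝ) : (ENNReal.ofReal z).toReal = max 0 (z) := by
  rcases le_or_gt z 0 with h | h
  · rw [ENNReal.ofReal_eq_zero.2 h, ENNReal.toReal_zero, max_eq_left h]
  · rw [ENNReal.toReal_ofReal h.le, max_eq_right h.le]

/-- Value of the permuton on a rectangle. -/
lemma hatPerm_apply (n : ℕ) (hn : 0 < n) (π : Equiv.Perm (Fin n)) (a b c d : ℝ) :
    (hatPerm n π (Icc a b ×ˢ Icc c d)).toReal =
      ∑ i : Fin n, (n : ℝ) *
        (max 0 (min b ((((i : ℕ) : ℝ) + 1) / n) - max a (((i : ℕ) : ℝ) / n)) *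
         max 0 (min d ((((π i : ℕ) : ℝ) + 1) / n) - max c (((π i : ℕ) : ℝ) / n))) := by
  have hR : MeasurableSet (Icc a b ×ˢ Icc c d) :=
    measurableSet_Icc.prod measurableSet_Icc
  set U : Fin n → Set (ℝ × ℝ) := fun i =>
    Icc (((i : ℕ) : ℝ) / n) ((((i : ℕ) : ℝ) + 1) / n) ×ˢ
      Icc (((π i : ℕ) : ℝ) / n) ((((π i : ℕ) : ℝ) + 1) / n) with hUdef
  have hU : ∀ i, MeasurableSet (U i) := fun i =>
    measurableSet_Icc.prod measurableSet_Icc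
  have hnull : ∀ i j : Fin n, i ≠ j → volume (U i ∩ U j) = 0 := by
    intro i j hij
    have hx : volume (Icc (((i : ℕ) : ℝ) / n) ((((i : ℕ) : ℝ) + 1) / n) ∩
        Icc (((j : ℕ) : ℝ) / n) ((((j : ℕ) : ℝ) + 1) / n)) = 0 := by
      rw [Icc_inter_Icc, Real.volume_Icc, ENNReal.ofReal_eq_zero]
      have hvne : (i : ℕ) ≠ (j : ℕ) := fun h => hij (Fin.ext h)
      rcases hvne.lt_or_gt with h | h
      · have h1 : ((((i:ℕ):ℝ) + 1) / n) ≤ (((j:ℕ):ℝ) / n) := by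
          have : ((i:ℕ):ℝ) + 1 ≤ ((j:ℕ):ℝ) := by exact_mod_cast h
          gcongr
        calc ((((i:ℕ):ℝ) + 1) / n) ⊓ ((((j:ℕ):ℝ) + 1) / n) - (((i:ℕ):ℝ) / n) ⊔ (((j:ℕ):ℝ) / n)
            ≤ ((((i:ℕ):ℝ) + 1) / n) - (((j:ℕ):ℝ) / n) := by
              gcongr
              · exact inf_le_left
              · exact le_sup_right
          _ ≤ 0 := by linarith
      · have h1 : ((((j:ℕ):ℝ) + 1) / n) ≤ (((i:ℕ):ℝ) / n) := by
          have : ((j:ℕ):ℝ) + 1 ≤ ((i:ℕ):ℝ) := by exact_mod_cast h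
          gcongr
        calc ((((i:ℕ):ℝ) + 1) / n) ⊓ ((((j:ℕ):ℝ) + 1) / n) - (((i:ℕ):ℝ) / n) ⊔ (((j:ℕ):ℝ) / n)
            ≤ ((((j:ℕ):ℝ) + 1) / n) - (((i:ℕ):ℝ) / n) := by
              gcongr
              · exact inf_le_right
              · exact le_sup_left
          _ ≤ 0 := by linarith
    have : U i ∩ U j ⊆ (Icc (((i : ℕ) : ℝ) / n) ((((i : ℕ) : ℝ) + 1) / n) ∩
        Icc (((j : ℕ) : ℝ) / n) ((((j : ℕ) : ℝ) + 1) / n)) ×ˢ univ := by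
      rw [hUdef]
      simp only [prod_inter_prod]
      exact prod_mono le_rfl (subset_univ _)
    refine measure_mono_null this ?_
    rw [Measure.volume_eq_prod, Measure.prod_prod, hx, zero_mul]
  have key : volume ((Icc a b ×ˢ Icc c d) ∩ ⋃ i, U i) =
      ∑ i : Fin n, volume ((Icc a b ×ˢ Icc c d) ∩ U i) := by
    rw [inter_iUnion,
      measure_iUnion₀ (fun i j hij => measure_mono_null
        (inter_subset_inter inter_subset_right inter_subset_right) (hnull i j hij))
        (fun i => (hR.inter (hU i)).nullMeasurableSet), tsum_fintype]
  have hterm : ∀ i : Fin n, volume ((Icc a b ×ˢ Icc c d) ∩ U i) =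
      ENNReal.ofReal (min b ((((i : ℕ) : ℝ) + 1) / n) - max a (((i : ℕ) : ℝ) / n)) *
      ENNReal.ofReal (min d ((((π i : ℕ) : ℝ) + 1) / n) - max c (((π i : ℕ) : ℝ) / n)) := by
    intro i
    rw [hUdef]
    simp only [prod_inter_prod, Icc_inter_Icc]
    rw [Measure.volume_eq_prod, Measure.prod_prod, Real.volume_Icc, Real.volume_Icc]
  rw [hatPerm, Measure.smul_apply, smul_eq_mul, Measure.restrict_apply hR, key,
    ENNReal.toReal_mul]
  rw [ENNReal.toReal_sum (fun i _ => by
    rw [hterm i]; exact ENNReal.mul_ne_top ENNReal.ofReal_ne_top ENNReal.ofReal_ne_top)]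
  rw [show ((n : ENNReal)).toReal = (n : ℝ) from rfl, Finset.mul_sum]
  refine Finset.sum_congr rfl fun i _ => ?_
  rw [hterm i, ENNReal.toReal_mul, toReal_ofReal_max, toReal_ofReal_max]

/-- Value of the empirical measure on a rectangle. -/
lemma emp_apply (n : ℕ) (hn : 0 < n) (π : Equiv.Perm (Fin n)) (a b c d : ℝ) :
    (empMeasure (permPts n π) (Icc a b ×ˢ Icc c d)).toReal =
      ∑ i : Fin n,
        (if ((((i : ℕ) : ℝ) + 1) / n ∈ Icc a b ∧ (((π i : ℕ) : ℝ) + 1) / n ∈ Icc c d)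
          then 1 / (n : ℝ) else 0) := by
  classical
  have hR : MeasurableSet (Icc a b ×ˢ Icc c d) :=
    measurableSet_Icc.prod measurableSet_Icc
  rw [empMeasure, Measure.smul_apply, smul_eq_mul, Measure.finset_sum_apply,
    ENNReal.toReal_mul, ENNReal.toReal_inv]
  rw [ENNReal.toReal_sum (fun i _ => by
    rw [Measure.dirac_apply' _ hR, Set.indicator_apply]
    split <;> simp)]
  rw [show ((n : ENNReal)).toReal = (n : ℝ) from rfl, Finset.mul_sum]
  refine Finset.sum_congr rfl fun i _ => ?_
  rw [Measure.dirac_apply' _ hR, Set.indicator_apply]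
  have hiff : permPts n π i ∈ Icc a b ×ˢ Icc c d ↔
      ((((i : ℕ) : ℝ) + 1) / n ∈ Icc a b ∧ (((π i : ℕ) : ℝ) + 1) / n ∈ Icc c d) :=
    Set.mem_prod
  by_cases h : ((((i : ℕ) : ℝ) + 1) / n ∈ Icc a b ∧ (((π i : ℕ) : ℝ) + 1) / n ∈ Icc c d)
  · rw [if_pos (hiff.2 h), if_pos h, Pi.one_apply, ENNReal.toReal_one, mul_one, one_div]
  · rw [if_neg (fun hh => h (hiff.1 hh)), if_neg h, ENNReal.toReal_zero, mul_zero]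

/-- Dichotomy in one coordinate. -/
lemma dicho (e a b α : ℝ) (he : 0 < e)
    (ha : a ∉ Ioc α (α + e)) (hb : b ∉ Ico α (α + e)) :
    (a ≤ α ∧ α + e ≤ b) ∨ (min b (α + e) - max a α ≤ 0 ∧ (α + e) ∉ Icc a b) := by
  simp only [mem_Ioc, mem_Ico, mem_Icc, not_and, not_lt, not_le] at *
  rcases le_or_gt a α with h1 | h1
  · rcases le_or_gt (α + e) b with h2 | h2
    · exact Or.inl ⟨h1, h2⟩
    · have hb' : b < α := by
        rcases lt_or_ge b α with hb' | hb'
        · exact hb'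
        · exact absurd (hb hb') (not_le.2 h2)
      exact Or.inr ⟨by linarith [min_le_left b (α + e), le_max_right a α],
        fun _ => by linarith⟩
  · have ha' : α + e < a := ha h1
    exact Or.inr ⟨by linarith [min_le_right b (α + e), le_max_left a α],
      fun h => absurd h (not_le.2 ha')⟩

/-- If the four boundary lines avoid this cell, the contributions agree. -/
lemma cell_eq (n : ℕ) (hn : 0 < n) (a b c d α γ : ℝ)
    (ha : a ∉ Ioc α (α + 1/(n:ℝ))) (hb : b ∉ Ico α (α + 1/(n:ℝ)))
    (hc : c ∉ Ioc γ (γ + 1/(n:ℝ))) (hd : d ∉ Ico γ (γ + 1/(n:ℝ))) :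
    (n : ℝ) * (max 0 (min b (α + 1/(n:ℝ)) - max a α) * max 0 (min d (γ + 1/(n:ℝ)) - max c γ)) =
      (if ((α + 1/(n:ℝ)) ∈ Icc a b ∧ (γ + 1/(n:ℝ)) ∈ Icc c d) then 1 / (n : ℝ) else 0) := by
  have hne : (0:ℝ) < 1/(n:ℝ) := by positivity
  rcases dicho _ a b α hne ha hb with hx | hx
  · rcases dicho _ c d γ hne hc hd with hy | hy
    · have e1 : min b (α + 1/(n:ℝ)) = α + 1/(n:ℝ) := min_eq_right hx.2
      have e2 : max a α = α := max_eq_right hx.1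
      have e3 : min d (γ + 1/(n:ℝ)) = γ + 1/(n:ℝ)  := min_eq_right hy.2
      have e4 : max c γ = γ := max_eq_right hy.1
      rw [e1, e2, e3, e4]
      have hmem : (α + 1/(n:ℝ)) ∈ Icc a b ∧ (γ + 1/(n:ℝ)) ∈ Icc c d :=
        ⟨⟨by linarith, hx.2⟩, ⟨by linarith, hy.2⟩⟩
      rw [if_pos hmem, show α + 1/(n:ℝ) - α = 1/(n:ℝ) by ring,
        show γ + 1/(n:ℝ) - γ = 1/(n:ℝ) by ring, max_eq_right hne.le]
      field_simp
    · rw [max_eq_left hy.1, mul_zero, mul_zero,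
        if_neg (fun h => hy.2 h.2)]
  · rw [max_eq_left hx.1, zero_mul, mul_zero,
      if_neg (fun h => hx.2 h.1)]

/-- The contributions are both in `[0, 1/n]`, so their difference is at most `1/n`. -/
lemma cell_bound (n : ℕ) (hn : 0 < n) (a b c d α γ : ℝ) :
    |(n : ℝ) * (max 0 (min b (α + 1/(n:ℝ)) - max a α) * max 0 (min d (γ + 1/(n:ℝ)) - max c γ)) -
      (if ((α + 1/(n:ℝ)) ∈ Icc a b ∧ (γ + 1/(n:ℝ)) ∈ Icc c d) then 1 / (n : ℝ) else 0)|
      ≤ 1 / (n:ℝ) := by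
  have hnp : (0:ℝ) < (n:ℝ) := by positivity
  have h1 : (0:ℝ) ≤ max 0 (min b (α + 1/(n:ℝ)) - max a α) := le_max_left _ _
  have h2 : (0:ℝ) ≤ max 0 (min d (γ + 1/(n:ℝ)) - max c γ) := le_max_left _ _
  have h3 : max 0 (min b (α + 1/(n:ℝ)) - max a α) ≤ 1/(n:ℝ) := by
    apply max_le (by positivity)
    have := min_le_right b (α + 1/(n:ℝ))
    have := le_max_right a α
    linarith
  have h4 : max 0 (min d (γ + 1/(n:ℝ)) - max c γ) ≤ 1/(n:ℝ) := by
    apply max_le (by positivity)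
    have := min_le_right d (γ + 1/(n:ℝ))
    have := le_max_right c γ
    linarith
  have hf0 : (0:ℝ) ≤ (n : ℝ) * (max 0 (min b (α + 1/(n:ℝ)) - max a α) *
      max 0 (min d (γ + 1/(n:ℝ)) - max c γ)) := by positivity
  have hf1 : (n : ℝ) * (max 0 (min b (α + 1/(n:ℝ)) - max a α) *
      max 0 (min d (γ + 1/(n:ℝ)) - max c γ)) ≤ 1/(n:ℝ) := by
    have : max 0 (min b (α + 1/(n:ℝ)) - max a α) * max 0 (min d (γ + 1/(n:ℝ)) - max c γ)
        ≤ (1/(n:ℝ)) * (1/(n:ℝ)) := mul_le_mul h3 h4 h2 (by positivity)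
    calc (n : ℝ) * _ ≤ (n:ℝ) * ((1/(n:ℝ)) * (1/(n:ℝ))) := by
          exact mul_le_mul_of_nonneg_left this hnp.le
      _ = 1/(n:ℝ) := by field_simp
  have hg0 : (0:ℝ) ≤ (if ((α + 1/(n:ℝ)) ∈ Icc a b ∧ (γ + 1/(n:ℝ)) ∈ Icc c d)
      then 1 / (n : ℝ) else 0) := by positivity
  have hg1 : (if ((α + 1/(n:ℝ)) ∈ Icc a b ∧ (γ + 1/(n:ℝ)) ∈ Icc c d)
      then 1 / (n : ℝ) else 0) ≤ 1/(n:ℝ) := by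
    split
    · exact le_rfl
    · positivity
  rw [abs_le]
  constructor <;> linarith

/-- Main pointwise bound. -/
lemma key_bound (n : ℕ) (hn : 0 < n) (π : Equiv.Perm (Fin n)) (a b c d : ℝ) :
    |(hatPerm n π (Icc a b ×ˢ Icc c d)).toReal -
      (empMeasure (permPts n π) (Icc a b ×ˢ Icc c d)).toReal| ≤ 4 / (n : ℝ) := by
  classical
  have hnp : (0:ℝ) < (n:ℝ) := by positivity
  rw [hatPerm_apply n hn π a b c d, emp_apply n hn π a b c d]
  have hdiv : ∀ x : ℝ, (x + 1) / (n:ℝ) = x / n + 1/n := fun x => add_div x 1 n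
  simp only [hdiv]
  rw [← Finset.sum_sub_distrib]
  refine (Finset.abs_sum_le_sum_abs _ _).trans ?_
  set flag : Fin n → Prop := fun i =>
    a ∈ Ioc (((i:ℕ):ℝ)/n) (((i:ℕ):ℝ)/n + 1/n) ∨ b ∈ Ico (((i:ℕ):ℝ)/n) (((i:ℕ):ℝ)/n + 1/n) ∨
    c ∈ Ioc (((π i:ℕ):ℝ)/n) (((π i:ℕ):ℝ)/n + 1/n) ∨
    d ∈ Ico (((π i:ℕ):ℝ)/n) (((π i:ℕ):ℝ)/n + 1/n) with hflag
  have step1 : ∑ i : Fin n,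
      |(n : ℝ) * (max 0 (min b (((i:ℕ):ℝ)/n + 1/n) - max a (((i:ℕ):ℝ)/n)) *
          max 0 (min d (((π i:ℕ):ℝ)/n + 1/n) - max c (((π i:ℕ):ℝ)/n))) -
        (if ((((i:ℕ):ℝ)/n + 1/n) ∈ Icc a b ∧ (((π i:ℕ):ℝ)/n + 1/n) ∈ Icc c d)
          then 1 / (n : ℝ) else 0)|
      ≤ ∑ i : Fin n, (if flag i then 1/(n:ℝ) else 0) := by
    refine Finset.sum_le_sum fun i _ => ?_
    by_cases h : flag i
    · rw [if_pos h]; exact cell_bound n hn a b c d _ _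
    · rw [if_neg h]
      simp only [hflag, not_or] at h
      rw [cell_eq n hn a b c d _ _ h.1 h.2.1 h.2.2.1 h.2.2.2, sub_self, abs_zero]
  refine step1.trans ?_
  have hcard : (Finset.univ.filter flag).card ≤ 4 := by
    have hcx : ∀ (x : ℝ), (Finset.univ.filter
        (fun i : Fin n => x ∈ Ioc (((i:ℕ):ℝ)/n) (((i:ℕ):ℝ)/n + 1/n))).card ≤ 1 := by
      intro x
      rw [Finset.card_le_one]
      intro i hi j hj
      simp only [Finset.mem_filter, mem_Ioc] at hi hj
      have h1 : (((i:ℕ):ℝ)/n) < (((j:ℕ):ℝ)/n + 1/n) := lt_of_lt_of_le hi.2.1 hj.2.2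
      have h2 : (((j:ℕ):ℝ)/n) < (((i:ℕ):ℝ)/n + 1/n) := lt_of_lt_of_le hj.2.1 hi.2.2
      have h1' : ((i:ℕ):ℝ) < (j:ℕ) + 1 := by
        rw [← add_div] at h1
        exact (div_lt_div_iff_of_pos_right hnp).1 h1
      have h2' : ((j:ℕ):ℝ) < (i:ℕ) + 1 := by
        rw [← add_div] at h2
        exact (div_lt_div_iff_of_pos_right hnp).1 h2
      have : (i:ℕ) = (j:ℕ) := by
        have a1 : (i:ℕ) < (j:ℕ) + 1 := by exact_mod_cast h1'
        have a2 : (j:ℕ) < (i:ℕ) + 1 := by exact_mod_cast h2'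
        omega
      exact Fin.ext this
    have hcx' : ∀ (x : ℝ), (Finset.univ.filter
        (fun i : Fin n => x ∈ Ico (((i:ℕ):ℝ)/n) (((i:ℕ):ℝ)/n + 1/n))).card ≤ 1 := by
      intro x
      rw [Finset.card_le_one]
      intro i hi j hj
      simp only [Finset.mem_filter, mem_Ico] at hi hj
      have h1 : (((i:ℕ):ℝ)/n) < (((j:ℕ):ℝ)/n + 1/n) := lt_of_le_of_lt hi.2.1 hj.2.2
      have h2 : (((j:ℕ):ℝ)/n) < (((i:ℕ):ℝ)/n + 1/n) := lt_of_le_of_lt hj.2.1 hi.2.2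
      have h1' : ((i:ℕ):ℝ) < (j:ℕ) + 1 := by
        rw [← add_div] at h1
        exact (div_lt_div_iff_of_pos_right hnp).1 h1
      have h2' : ((j:ℕ):ℝ) < (i:ℕ) + 1 := by
        rw [← add_div] at h2
        exact (div_lt_div_iff_of_pos_right hnp).1 h2
      have : (i:ℕ) = (j:ℕ) := by
        have a1 : (i:ℕ) < (j:ℕ) + 1 := by exact_mod_cast h1'
        have a2 : (j:ℕ) < (i:ℕ) + 1 := by exact_mod_cast h2'
        omega
      exact Fin.ext this
    have hcy : ∀ (x : ℝ), (Finset.univ.filter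
        (fun i : Fin n => x ∈ Ioc (((π i:ℕ):ℝ)/n) (((π i:ℕ):ℝ)/n + 1/n))).card ≤ 1 := by
      intro x
      rw [Finset.card_le_one]
      intro i hi j hj
      simp only [Finset.mem_filter, mem_Ioc] at hi hj
      have h1 : (((π i:ℕ):ℝ)/n) < (((π j:ℕ):ℝ)/n + 1/n) := lt_of_lt_of_le hi.2.1 hj.2.2
      have h2 : (((π j:ℕ):ℝ)/n) < (((π i:ℕ):ℝ)/n + 1/n) := lt_of_lt_of_le hj.2.1 hi.2.2
      have h1' : ((π i:ℕ):ℝ) < (π j:ℕ) + 1 := by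
        rw [← add_div] at h1
        exact (div_lt_div_iff_of_pos_right hnp).1 h1
      have h2' : ((π j:ℕ):ℝ) < (π i:ℕ) + 1 := by
        rw [← add_div] at h2
        exact (div_lt_div_iff_of_pos_right hnp).1 h2
      have : (π i:ℕ) = (π j:ℕ) := by
        have a1 : (π i:ℕ) < (π j:ℕ) + 1 := by exact_mod_cast h1'
        have a2 : (π j:ℕ) < (π i:ℕ) + 1 := by exact_mod_cast h2'
        omega
      exact π.injective (Fin.ext this)
    have hcy' : ∀ (x : ℝ), (Finset.univ.filter
        (fun i : Fin n => x ∈ Ico (((π i:ℕ):ℝ)/n) (((π i:ℕ):ℝ)/n + 1/n))).card ≤ 1 := by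
      intro x
      rw [Finset.card_le_one]
      intro i hi j hj
      simp only [Finset.mem_filter, mem_Ico] at hi hj
      have h1 : (((π i:ℕ):ℝ)/n) < (((π j:ℕ):ℝ)/n + 1/n) := lt_of_le_of_lt hi.2.1 hj.2.2
      have h2 : (((π j:ℕ):ℝ)/n) < (((π i:ℕ):ℝ)/n + 1/n) := lt_of_le_of_lt hj.2.1 hi.2.2
      have h1' : ((π i:ℕ):ℝ) < (π j:ℕ) + 1 := by
        rw [← add_div] at h1
        exact (div_lt_div_iff_of_pos_right hnp).1 h1
      have h2' : ((π j:ℕ):ℝ) < (π i:ℕ) + 1 := by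
        rw [← add_div] at h2
        exact (div_lt_div_iff_of_pos_right hnp).1 h2
      have : (π i:ℕ) = (π j:ℕ) := by
        have a1 : (π i:ℕ) < (π j:ℕ) + 1 := by exact_mod_cast h1'
        have a2 : (π j:ℕ) < (π i:ℕ) + 1 := by exact_mod_cast h2'
        omega
      exact π.injective (Fin.ext this)
    have hsub : Finset.univ.filter flag ⊆
        ((Finset.univ.filter (fun i : Fin n => a ∈ Ioc (((i:ℕ):ℝ)/n) (((i:ℕ):ℝ)/n + 1/n))) ∪
         (Finset.univ.filter (fun i : Fin n => b ∈ Ico (((i:ℕ):ℝ)/n) (((i:ℕ):ℝ)/n + 1/n))) ∪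
         (Finset.univ.filter (fun i : Fin n => c ∈ Ioc (((π i:ℕ):ℝ)/n) (((π i:ℕ):ℝ)/n + 1/n))) ∪
         (Finset.univ.filter (fun i : Fin n => d ∈ Ico (((π i:ℕ):ℝ)/n) (((π i:ℕ):ℝ)/n + 1/n)))) := by
      intro i hi
      simp only [Finset.mem_filter, Finset.mem_union, Finset.mem_univ, true_and, hflag] at hi ⊢
      tauto
    have h1 := hcx a
    have h2 := hcx' b
    have h3 := hcy c
    have h4 := hcy' d
    refine (Finset.card_le_card hsub).trans ?_
    refine le_trans (Finset.card_union_le _ _) ?_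
    refine le_trans (Nat.add_le_add_right (Finset.card_union_le _ _) _) ?_
    refine le_trans (Nat.add_le_add_right (Nat.add_le_add_right (Finset.card_union_le _ _) _) _) ?_
    omega
  calc ∑ i : Fin n, (if flag i then 1/(n:ℝ) else 0)
      = ∑ i ∈ Finset.univ.filter flag, 1/(n:ℝ) := (Finset.sum_filter _ _).symm
    _ = ((Finset.univ.filter flag).card : ℝ) * (1/(n:ℝ)) := by
        rw [Finset.sum_const, nsmul_eq_mul]
    _ ≤ 4 * (1/(n:ℝ)) := by
        apply mul_le_mul_of_nonneg_right _ (by positivity)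
        exact_mod_cast hcard
    _ = 4 / (n:ℝ) := by ring

end PermutonAux

theorem hatPerm_dist_empirical (n : ℕ) (hn : 0 < n) (π : Equiv.Perm (Fin n)) :
    1 / (n : ℝ) ≤ dRect (hatPerm n π) (empMeasure (permPts n π)) ∧
      dRect (hatPerm n π) (empMeasure (permPts n π)) ≤ 4 / (n : ℝ) := by
  have hnp : (0:ℝ) < (n:ℝ) := by positivity
  have hkey : ∀ r : ℝ × ℝ × ℝ × ℝ,
      |(hatPerm n π (Icc r.1 r.2.1 ×ˢ Icc r.2.2.1 r.2.2.2)).toReal -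
        (empMeasure (permPts n π) (Icc r.1 r.2.1 ×ˢ Icc r.2.2.1 r.2.2.2)).toReal| ≤ 4 / (n:ℝ) :=
    fun r => PermutonAux.key_bound n hn π r.1 r.2.1 r.2.2.1 r.2.2.2
  have hbdd : BddAbove (Set.range fun r : ℝ × ℝ × ℝ × ℝ =>
      |(hatPerm n π (Icc r.1 r.2.1 ×ˢ Icc r.2.2.1 r.2.2.2)).toReal -
        (empMeasure (permPts n π) (Icc r.1 r.2.1 ×ˢ Icc r.2.2.1 r.2.2.2)).toReal|) := by
    refine ⟨4 / (n:ℝ), ?_⟩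
    rintro x ⟨r, rfl⟩
    exact hkey r
  constructor
  · -- lower bound: use the degenerate rectangle at the first point
    set p : ℝ × ℝ := permPts n π ⟨0, hn⟩ with hp
    have hle := le_ciSup hbdd (p.1, p.1, p.2, p.2)
    refine le_trans ?_ hle
    have h0 : (hatPerm n π (Icc p.1 p.1 ×ˢ Icc p.2 p.2)) = 0 := by
      rw [hatPerm, Measure.smul_apply, smul_eq_mul, Measure.restrict_apply
        (measurableSet_Icc.prod measurableSet_Icc)]
      have hz : volume (Icc p.1 p.1 ×ˢ Icc p.2 p.2) = 0 := by
        rw [Measure.volume_eq_prod, Measure.prod_prod, Real.volume_Icc, sub_self,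
          ENNReal.ofReal_zero, zero_mul]
      rw [measure_mono_null inter_subset_left hz, mul_zero]
    have hemp : 1/(n:ℝ) ≤ (empMeasure (permPts n π) (Icc p.1 p.1 ×ˢ Icc p.2 p.2)).toReal := by
      rw [PermutonAux.emp_apply n hn π p.1 p.1 p.2 p.2]
      have hterm : (if ((((⟨0, hn⟩ : Fin n):ℕ):ℝ) + 1) / n ∈ Icc p.1 p.1 ∧
          (((π ⟨0, hn⟩:ℕ):ℝ) + 1) / n ∈ Icc p.2 p.2 then 1/(n:ℝ) else 0) = 1/(n:ℝ) := by
        rw [if_pos]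
        constructor
        · rw [hp]; exact ⟨le_rfl, le_rfl⟩
        · rw [hp]; exact ⟨le_rfl, le_rfl⟩
      calc 1/(n:ℝ) = _ := hterm.symm
        _ ≤ _ := Finset.single_le_sum (f := fun i : Fin n =>
            (if ((((i:ℕ):ℝ) + 1) / n ∈ Icc p.1 p.1 ∧ (((π i:ℕ):ℝ) + 1) / n ∈ Icc p.2 p.2)
              then 1/(n:ℝ) else 0)) (fun i _ => by positivity) (Finset.mem_univ _)
    calc 1/(n:ℝ) ≤ (empMeasure (permPts n π) (Icc p.1 p.1 ×ˢ Icc p.2 p.2)).toReal := hemp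
      _ = |(hatPerm n π (Icc p.1 p.1 ×ˢ Icc p.2 p.2)).toReal -
          (empMeasure (permPts n π) (Icc p.1 p.1 ×ˢ Icc p.2 p.2)).toReal| := by
          rw [h0]
          simp [abs_of_nonpos, ENNReal.toReal_nonneg]
  · exact ciSup_le hkey
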